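/- arXiv:1902.10689 — 3 statements merged into one kernel-verified Lean document; each statement's English description precedes it below -/
import Mathlib

section
/- Let G be a finite nested group with chain of centers G = X_0 > X_1 > ⋯ > X_n ≥ 1. Then for every i ∈ {0, …, n}, the image of X_i in G/[X_i,G] equals the center of G/[X_i,G]; that is, X_i/[X_i,G] = Z(G/[X_i,G]). In particular (case i = n), X_n = Z(G). -/
open CategoryTheory

noncomputable section

/-- The kernel of the character of `V`: `{g | χ(g) = χ(1)}`. -/
def charKernel {G : Type} [Group G] (V : FDRep ℂ G) : Set G :=
  {g | V.character g = V.character 1}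

/-- The center of the character of `V`: `{g | |χ(g)| = χ(1)}`. -/
def charCenter {G : Type} [Group G] (V : FDRep ℂ G) : Set G :=
  {g | ((‖V.character g‖ : ℝ) : ℂ) = V.character 1}

/-- The degree `χ(1)` of the character of `V`. -/
def charDegree {G : Type} [Group G] (V : FDRep ℂ G) : ℕ :=
  Module.finrank ℂ V

/-- A group is nested if the centers of its irreducible characters form a chain. -/
def Nested (G : Type) [Group G] : Prop :=
  ∀ V W : FDRep ℂ G, Simple V → Simple W →
    charCenter V ⊆ charCenter W ∨ charCenter W ⊆ charCenter V

/-- `G = X 0 > X 1 > ⋯ > X n ≥ 1` is the chain of centers for `G`: the `X i` are the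
distinct subgroups arising as centers of irreducible characters of `G`. -/
def IsChainOfCenters {G : Type} [Group G] (n : ℕ) (X : ℕ → Subgroup G) : Prop :=
  X 0 = ⊤ ∧ (∀ i ≤ n, (X i).Normal) ∧ (∀ i < n, X (i + 1) < X i) ∧
    (∀ i ≤ n, ∃ V : FDRep ℂ G, Simple V ∧ charCenter V = (X i : Set G)) ∧
    (∀ V : FDRep ℂ G, Simple V → ∃ i ≤ n, charCenter V = (X i : Set G))

/-- `N` is a minimal normal subgroup of `H`. -/
def IsMinimalNormal {H : Type*} [Group H] (N : Subgroup H) : Prop :=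
  N.Normal ∧ N ≠ ⊥ ∧ ∀ K : Subgroup H, K.Normal → K ≠ ⊥ → K ≤ N → K = N

/-- An elementary abelian `p`-group: abelian with every element of order dividing `p`. -/
def IsElementaryAbelian (p : ℕ) (H : Type*) [Group H] : Prop :=
  (∀ a b : H, a * b = b * a) ∧ ∀ a : H, a ^ p = 1

/-! ### Auxiliary lemmas -/

set_option linter.unusedSectionVars false
set_option maxHeartbeats 1000000

open Module Polynomial
open scoped commutatorElement

/-- Equality in the triangle inequality: if unit complex numbers with positive real weights sum
to something of absolute value equal to the total weight, all of them are equal. -/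
lemma aux_eq_of_abs_sum_eq (s : Finset ℂ) (d : ℂ → ℝ) (hd : ∀ μ ∈ s, 0 < d μ)
    (habs1 : ∀ μ ∈ s, ‖μ‖ = 1)
    (h : ‖∑ μ ∈ s, (d μ : ℂ) * μ‖ = ∑ μ ∈ s, d μ) :
    ∀ μ ∈ s, ∀ ν ∈ s, μ = ν := by
  set T : ℂ := ∑ μ ∈ s, (d μ : ℂ) * μ with hT
  set R : ℝ := ∑ μ ∈ s, d μ with hR
  have key : ∀ μ ∈ s, μ * (starRingEnd ℂ) T = (R : ℂ) := by
    have hle : ∀ μ ∈ s, (μ * (starRingEnd ℂ) T).re ≤ R := by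
      intro μ hμ
      calc (μ * (starRingEnd ℂ) T).re ≤ ‖μ * (starRingEnd ℂ) T‖ := Complex.re_le_norm _
        _ = ‖μ‖ * ‖T‖ := by simp [norm_mul]
        _ = R := by rw [habs1 μ hμ, h, one_mul]
    have hsum : ∑ μ ∈ s, d μ * (μ * (starRingEnd ℂ) T).re = R * R := by
      have : (T * (starRingEnd ℂ) T).re = R * R := by
        rw [Complex.mul_conj]
        rw [Complex.normSq_eq_norm_sq, h]
        rw [Complex.ofReal_re]; ring
      calc ∑ μ ∈ s, d μ * (μ * (starRingEnd ℂ) T).re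
          = ∑ μ ∈ s, (((d μ : ℂ) * μ) * (starRingEnd ℂ) T).re := by
            refine Finset.sum_congr rfl fun μ hμ => ?_
            rw [mul_assoc]
            rw [Complex.re_ofReal_mul]
        _ = (T * (starRingEnd ℂ) T).re := by
            rw [hT, Finset.sum_mul]
            rw [Complex.re_sum]
        _ = R * R := this
    have heach : ∀ μ ∈ s, (μ * (starRingEnd ℂ) T).re = R := by
      by_contra hcon
      push_neg at hcon
      obtain ⟨μ₀, hμ₀, hne⟩ := hcon
      have hlt : ∑ μ ∈ s, d μ * (μ * (starRingEnd ℂ) T).re < ∑ μ ∈ s, d μ * R := by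
        refine Finset.sum_lt_sum (fun μ hμ => ?_) ⟨μ₀, hμ₀, ?_⟩
        · exact mul_le_mul_of_nonneg_left (hle μ hμ) (hd μ hμ).le
        · exact mul_lt_mul_of_pos_left (lt_of_le_of_ne (hle μ₀ hμ₀) hne) (hd μ₀ hμ₀)
      rw [hsum, ← Finset.sum_mul] at hlt
      exact lt_irrefl _ hlt
    intro μ hμ
    have h1 : (μ * (starRingEnd ℂ) T).re = R := heach μ hμ
    have h2 : ‖μ * (starRingEnd ℂ) T‖ = R := by
      simp only [norm_mul, Complex.norm_conj]
      rw [habs1 μ hμ, h, one_mul]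
    have him : (μ * (starRingEnd ℂ) T).im = 0 := by
      have := Complex.sq_norm (μ * (starRingEnd ℂ) T)
      rw [h2, Complex.normSq_apply, h1] at this
      nlinarith [this]
    exact Complex.ext (by simp [h1]) (by simp [him])
  intro μ hμ ν hν
  rcases s.eq_empty_or_nonempty with rfl | ⟨μ₁, hμ₁⟩
  · simp at hμ
  have hRpos : 0 < R := Finset.sum_pos hd ⟨μ₁, hμ₁⟩
  have hTne : (starRingEnd ℂ) T ≠ 0 := by
    simp only [ne_eq, _root_.map_eq_zero]
    intro h0
    rw [h0] at h
    simp at h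
    exact hRpos.ne' h.symm
  have := (key μ hμ).trans (key ν hν).symm
  exact mul_right_cancel₀ hTne this

lemma aux_abs_eq_one_of_pow_eq_one {μ : ℂ} {m : ℕ} (hm : m ≠ 0) (h : μ ^ m = 1) :
    ‖μ‖ = 1 := by
  have h1 : (‖μ‖) ^ m = 1 := by
    rw [← norm_pow, h, norm_one]
  rcases lt_trichotomy (‖μ‖) 1 with hlt | heq | hgt
  · exact absurd h1 (by have := pow_lt_one₀ (norm_nonneg μ) hlt hm; linarith)
  · exact heq
  · exact absurd h1 (by have := one_lt_pow₀ hgt hm; linarith)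

section LinearAlgebra

variable {M : Type} [AddCommGroup M] [Module ℂ M]

lemma aux_semisimple_of_pow_eq_one {f : Module.End ℂ M} {m : ℕ} (hm : m ≠ 0) (hf : f ^ m = 1) :
    f.IsSemisimple := by
  have hsep : (X ^ m - 1 : ℂ[X]).Separable :=
    Polynomial.X_pow_sub_one_separable_iff.mpr
      (by exact_mod_cast (Nat.cast_ne_zero (R := ℂ)).mpr hm)
  refine Module.End.isSemisimple_of_squarefree_aeval_eq_zero hsep.squarefree ?_
  simp [map_sub, map_pow, hf]

variable [FiniteDimensional ℂ M]

lemma aux_eigenvalue_pow_eq_one {f : Module.End ℂ M} {m : ℕ} (hf : f ^ m = 1) {μ : ℂ}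
    (hμ : f.eigenspace μ ≠ ⊥) : μ ^ m = 1 := by
  obtain ⟨v, hv⟩ := (Module.End.hasEigenvalue_iff.mpr hμ).exists_hasEigenvector
  have h1 : (f ^ m) v = μ ^ m • v := hv.pow_apply m
  rw [hf] at h1
  have h2 : (μ ^ m - 1) • v = 0 := by
    rw [sub_smul, one_smul, ← h1]; exact sub_eq_zero.mpr rfl
  rcases smul_eq_zero.mp h2 with h | h
  · exact sub_eq_zero.mp h
  · exact absurd h hv.2

lemma aux_exists_scalar_of_abs_trace {f : Module.End ℂ M} {m : ℕ} (hm : m ≠ 0) (hf : f ^ m = 1)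
    (habs : ‖LinearMap.trace ℂ M f‖ = Module.finrank ℂ M) :
    ∃ c : ℂ, f = c • 1 := by
  classical
  have hss : f.IsSemisimple := aux_semisimple_of_pow_eq_one hm hf
  have heig : ⨆ μ, f.eigenspace μ = ⊤ := by
    have h1 := Module.End.iSup_maxGenEigenspace_eq_top f
    have h2 := hss.isFinitelySemisimple.maxGenEigenspace_eq_eigenspace
    simpa only [h2] using h1
  set N : ℂ → Submodule ℂ M := f.eigenspace with hN
  have ind : iSupIndep N := Module.End.eigenspaces_iSupIndep f
  have internal : DirectSum.IsInternal N :=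
    DirectSum.isInternal_submodule_of_iSupIndep_of_iSup_eq_top ind heig
  have hroots : {μ : ℂ | N μ ≠ ⊥} ⊆ {μ : ℂ | (X ^ m - 1 : ℂ[X]).IsRoot μ} := by
    intro μ hμ
    have := aux_eigenvalue_pow_eq_one hf hμ
    simp [Polynomial.IsRoot, this]
  have hXne : (X ^ m - 1 : ℂ[X]) ≠ 0 := by
    have hsep : (X ^ m - 1 : ℂ[X]).Separable :=
      Polynomial.X_pow_sub_one_separable_iff.mpr
        (by exact_mod_cast (Nat.cast_ne_zero (R := ℂ)).mpr hm)
    exact hsep.squarefree.ne_zero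
  have hfin : {μ : ℂ | N μ ≠ ⊥}.Finite :=
    (Polynomial.finite_setOf_isRoot hXne).subset hroots
  have hmaps : ∀ μ : ℂ, Set.MapsTo f (N μ) (N μ) := fun μ =>
    Module.End.mapsTo_genEigenspace_of_comm rfl μ 1
  have hmaps1 : ∀ μ : ℂ, Set.MapsTo (1 : Module.End ℂ M) (N μ) (N μ) := fun μ x hx => hx
  set s : Finset ℂ := hfin.toFinset with hs
  have htr := LinearMap.trace_eq_sum_trace_restrict' internal hfin hmaps
  have htr1 := LinearMap.trace_eq_sum_trace_restrict' internal hfin hmaps1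
  have hres : ∀ μ ∈ s, (LinearMap.trace ℂ (N μ)) (f.restrict (hmaps μ)) =
      μ * Module.finrank ℂ (N μ) := by
    intro μ _
    have : f.restrict (hmaps μ) = μ • (1 : Module.End ℂ (N μ)) := by
      ext ⟨v, hv⟩
      have := Module.End.mem_eigenspace_iff.mp hv
      exact this
    rw [this, map_smul, LinearMap.trace_one, smul_eq_mul]
  have hres1 : ∀ μ ∈ s, (LinearMap.trace ℂ (N μ)) ((1 : Module.End ℂ M).restrict (hmaps1 μ)) =
      (Module.finrank ℂ (N μ) : ℂ) := by
    intro μ _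
    have : (1 : Module.End ℂ M).restrict (hmaps1 μ) = (1 : Module.End ℂ (N μ)) := by
      ext ⟨v, hv⟩; rfl
    rw [this, LinearMap.trace_one]
  rw [Finset.sum_congr rfl hres] at htr
  rw [LinearMap.trace_one, Finset.sum_congr rfl hres1] at htr1
  have hdim : (Module.finrank ℂ M : ℝ) = ∑ μ ∈ s, (Module.finrank ℂ (N μ) : ℝ) := by
    exact_mod_cast htr1
  have hdpos : ∀ μ ∈ s, (0:ℝ) < (Module.finrank ℂ (N μ) : ℝ) := by
    intro μ hμ
    have hne : N μ ≠ ⊥ := by simpa [hs] using hμ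
    have : Nontrivial (N μ) := Submodule.nontrivial_iff_ne_bot.mpr hne
    exact_mod_cast Module.finrank_pos
  have habs1 : ∀ μ ∈ s, ‖μ‖ = 1 := by
    intro μ hμ
    have hne : N μ ≠ ⊥ := by simpa [hs] using hμ
    exact aux_abs_eq_one_of_pow_eq_one hm (aux_eigenvalue_pow_eq_one hf hne)
  have hsum : ‖∑ μ ∈ s, ((Module.finrank ℂ (N μ) : ℝ) : ℂ) * μ‖ =
      ∑ μ ∈ s, (Module.finrank ℂ (N μ) : ℝ) := by
    have : ∑ μ ∈ s, ((Module.finrank ℂ (N μ) : ℝ) : ℂ) * μ = LinearMap.trace ℂ M f := by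
      rw [htr]
      refine Finset.sum_congr rfl fun μ _ => ?_
      push_cast
      ring
    rw [this, habs, hdim]
  have hkey := aux_eq_of_abs_sum_eq s _ hdpos habs1 hsum
  by_cases h0 : Module.finrank ℂ M = 0
  · refine ⟨0, ?_⟩
    have : Subsingleton M := Module.finrank_zero_iff.mp h0
    ext v; simp [Subsingleton.elim v 0]
  · have hsne : s.Nonempty := by
      by_contra hemp
      rw [Finset.not_nonempty_iff_eq_empty] at hemp
      rw [hemp, Finset.sum_empty] at hdim
      exact h0 (by exact_mod_cast hdim)
    obtain ⟨c, hc⟩ := hsne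
    refine ⟨c, ?_⟩
    have htop : f.eigenspace c = ⊤ := by
      rw [← top_le_iff, ← heig]
      refine iSup_le fun μ => ?_
      by_cases hb : N μ = ⊥
      · rw [hb]; exact bot_le
      · have : μ = c := hkey μ (by simpa [hs] using hb) c hc
        rw [← this]
    ext v
    have hv : v ∈ f.eigenspace c := htop ▸ Submodule.mem_top
    simpa using Module.End.mem_eigenspace_iff.mp hv

lemma aux_restrict_sub_one (f : M →ₗ[ℂ] M)
    (p : Submodule ℂ M) (hf : ∀ v ∈ p, f v ∈ p) (hf' : ∀ v ∈ p, (f - 1) v ∈ p) :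
    f.restrict hf - 1 = (f - 1).restrict hf' := by
  ext v
  simp [LinearMap.restrict_coe_apply]

end LinearAlgebra

section GroupRep

variable {G : Type} [Group G] [Fintype G]

lemma aux_rho_pow_card (V : FDRep ℂ G) (g : G) : (V.ρ g) ^ (Fintype.card G) = 1 := by
  rw [← map_pow, pow_card_eq_one, map_one]

/-- The unit-group valued homomorphism attached to a representation. -/
def rhoUnits (V : FDRep ℂ G) : G →* (Module.End ℂ V)ˣ := MonoidHom.toHomUnits V.ρ

lemma rhoUnits_coe (V : FDRep ℂ G) (g : G) :
    ((rhoUnits V g : (Module.End ℂ V)ˣ) : Module.End ℂ V) = V.ρ g := rfl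

/-- The kernel of a representation, as a subgroup. -/
def repKer (V : FDRep ℂ G) : Subgroup G := (rhoUnits V).ker

lemma mem_repKer_iff (V : FDRep ℂ G) (g : G) : g ∈ repKer V ↔ V.ρ g = 1 := by
  constructor
  · intro h
    have h1 : rhoUnits V g = 1 := h
    have := congrArg (Units.val) h1
    simpa [rhoUnits_coe] using this
  · intro h
    have : rhoUnits V g = 1 := Units.ext (by simpa [rhoUnits_coe] using h)
    exact this

lemma commutator_mem_repKer_of_commute (V : FDRep ℂ G) {x g : G}
    (h : Commute (V.ρ x) (V.ρ g)) : ⁅x, g⁆ ∈ repKer V := by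
  have hu : Commute (rhoUnits V x) (rhoUnits V g) := Units.ext h
  have : rhoUnits V ⁅x, g⁆ = 1 := by
    rw [commutatorElement_def, map_mul, map_mul, map_mul, map_inv, map_inv,
      ← commutatorElement_def]
    exact commutatorElement_eq_one_iff_commute.mpr hu
  exact this

lemma commute_of_commutator_mem_repKer (V : FDRep ℂ G) {x g : G}
    (h : ⁅x, g⁆ ∈ repKer V) : Commute (V.ρ x) (V.ρ g) := by
  have h1 : rhoUnits V ⁅x, g⁆ = 1 := h
  rw [commutatorElement_def, map_mul, map_mul, map_mul, map_inv, map_inv,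
    ← commutatorElement_def] at h1
  have hu := commutatorElement_eq_one_iff_commute.mp h1
  exact congrArg Units.val (hu : _)

lemma mem_charCenter_of_scalar (V : FDRep ℂ G) [Nontrivial V] {g : G} {c : ℂ}
    (h : V.ρ g = c • 1) : g ∈ charCenter V := by
  have hm : Fintype.card G ≠ 0 := Fintype.card_ne_zero
  have hc : c ^ Fintype.card G = 1 := by
    have h1 := aux_rho_pow_card V g
    rw [h, _root_.smul_pow, one_pow] at h1
    have hone : (1 : Module.End ℂ V) ≠ 0 := by
      intro h0
      obtain ⟨v, hv⟩ := exists_ne (0 : V)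
      have := LinearMap.congr_fun h0 v
      simpa using hv this
    exact smul_left_injective ℂ hone (a₁ := c ^ Fintype.card G) (a₂ := 1) (by simpa using h1)
  have habs : ‖c‖ = 1 := aux_abs_eq_one_of_pow_eq_one hm hc
  show ((‖V.character g‖ : ℝ) : ℂ) = V.character 1
  have hchar : V.character g = c * (finrank ℂ V : ℂ) := by
    show LinearMap.trace ℂ V (V.ρ g) = _
    rw [h, map_smul, LinearMap.trace_one, smul_eq_mul]
  rw [hchar, FDRep.char_one, norm_mul, habs, one_mul]
  simp

lemma scalar_of_mem_charCenter (V : FDRep ℂ G) {g : G} (h : g ∈ charCenter V) :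
    ∃ c : ℂ, V.ρ g = c • 1 := by
  have hm : Fintype.card G ≠ 0 := Fintype.card_ne_zero
  refine aux_exists_scalar_of_abs_trace hm (aux_rho_pow_card V g) ?_
  have h' : ((‖V.character g‖ : ℝ) : ℂ) = V.character 1 := h
  rw [FDRep.char_one] at h'
  exact_mod_cast h'

/-- Schur: an element whose action commutes with the whole representation acts by a scalar. -/
lemma schur_scalar (V : FDRep ℂ G) [Simple V] (g : G)
    (hcomm : ∀ h : G, Commute (V.ρ h) (V.ρ g)) : ∃ c : ℂ, V.ρ g = c • 1 := by
  let φ : V ⟶ V := ⟨FGModuleCat.ofHom (V.ρ g), fun h => by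
    ext v; exact LinearMap.congr_fun (hcomm h).symm v⟩
  obtain ⟨c, hc⟩ := CategoryTheory.endomorphism_simple_eq_smul_id ℂ φ
  refine ⟨c, ?_⟩
  have := congrArg (fun f => f.hom.hom.hom) hc
  ext v
  have := LinearMap.congr_fun this v
  simp [Action.smul_hom] at this
  exact this.symm

lemma nontrivial_of_simple (V : FDRep ℂ G) [Simple V] : Nontrivial V := by
  by_contra hs
  rw [not_nontrivial_iff_subsingleton] at hs
  have h1 : (𝟙 V : V ⟶ V) = 0 := by
    apply Action.Hom.ext
    ext v
    exact @Subsingleton.elim _ hs _ _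
  exact (CategoryTheory.id_nonzero V) h1

/-- An invariant submodule gives a subrepresentation. -/
def resRep (U : FDRep ℂ G) (p : Submodule ℂ U) (hp : ∀ g : G, ∀ v ∈ p, U.ρ g v ∈ p) :
    Representation ℂ G p where
  toFun g := (U.ρ g).restrict (hp g)
  map_one' := by ext v; simp [LinearMap.restrict_apply]
  map_mul' a b := by ext v; simp [LinearMap.restrict_apply, map_mul]

lemma resRep_apply (U : FDRep ℂ G) (p : Submodule ℂ U) (hp : ∀ g : G, ∀ v ∈ p, U.ρ g v ∈ p)
    (g : G) : resRep U p hp g = (U.ρ g).restrict (hp g) := rfl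

/-- An invariant submodule gives a quotient representation. -/
def quotRep (U : FDRep ℂ G) (p : Submodule ℂ U) (hp : ∀ g : G, ∀ v ∈ p, U.ρ g v ∈ p) :
    Representation ℂ G (U ⧸ p) where
  toFun g := p.mapQ p (U.ρ g) (fun v hv => hp g v hv)
  map_one' := by
    refine Submodule.linearMap_qext _ ?_
    ext v; simp [Submodule.mapQ_apply]
  map_mul' a b := by
    refine Submodule.linearMap_qext _ ?_
    ext v; simp [Submodule.mapQ_apply, map_mul]

lemma quotRep_apply (U : FDRep ℂ G) (p : Submodule ℂ U) (hp : ∀ g : G, ∀ v ∈ p, U.ρ g v ∈ p)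
    (g : G) : quotRep U p hp g = p.mapQ p (U.ρ g) (fun v hv => hp g v hv) := rfl

lemma simple_of_no_invariant (U : FDRep ℂ G) (hnz : Nontrivial U)
    (hirr : ∀ p : Submodule ℂ U, (∀ g : G, ∀ v ∈ p, U.ρ g v ∈ p) → p = ⊥ ∨ p = ⊤) :
    Simple U := by
  constructor
  intro Y f hmono
  constructor
  · intro hiso hf0
    subst hf0
    have hinv : inv (0 : Y ⟶ U) ≫ (0 : Y ⟶ U) = 𝟙 U := IsIso.inv_hom_id _
    rw [Limits.comp_zero] at hinv
    have := congrArg Action.Hom.hom hinv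
    rw [Action.zero_hom, Action.id_hom] at this
    obtain ⟨v, hv⟩ := exists_ne (0 : U)
    have := LinearMap.congr_fun (congrArg (fun f => f.hom.hom) this.symm) v
    exact hv (by simpa using this)
  · intro hf0
    set L : Y →ₗ[ℂ] U := f.hom.hom.hom with hL
    have hequiv : ∀ (g : G) (w : Y), L (Y.ρ g w) = U.ρ g (L w) := by
      intro g w
      exact LinearMap.congr_fun (congrArg (fun f => f.hom.hom) (f.comm g)) w
    have hrangeInv : ∀ g : G, ∀ v ∈ LinearMap.range L, U.ρ g v ∈ LinearMap.range L := by
      rintro g v ⟨w, rfl⟩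
      exact ⟨Y.ρ g w, hequiv g w⟩
    have hrange : LinearMap.range L = ⊤ := by
      rcases hirr _ hrangeInv with hbot | htop
      · exfalso
        apply hf0
        apply Action.Hom.ext
        ext w
        have : L w ∈ LinearMap.range L := ⟨w, rfl⟩
        rw [hbot] at this
        simpa using this
      · exact htop
    have hkerInv : ∀ g : G, ∀ v ∈ LinearMap.ker L, Y.ρ g v ∈ LinearMap.ker L := by
      intro g v hv
      rw [LinearMap.mem_ker] at hv ⊢
      rw [hequiv, hv, map_zero]
    let K : FDRep ℂ G := FDRep.of (resRep Y (LinearMap.ker L) hkerInv)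
    let ι : K ⟶ Y := ⟨FGModuleCat.ofHom (LinearMap.ker L).subtype, fun g => by ext v; rfl⟩
    have hcomp : ι ≫ f = (0 : K ⟶ Y) ≫ f := by
      apply Action.Hom.ext
      rw [Action.comp_hom, Action.comp_hom, Action.zero_hom]
      ext v
      show L v.1 = L 0
      rw [map_zero]
      exact v.2
    have hι0 : ι = 0 := Mono.right_cancellation _ _ hcomp
    have hker : LinearMap.ker L = ⊥ := by
      rw [Submodule.eq_bot_iff]
      intro v hv
      have h1 := congrArg Action.Hom.hom hι0
      rw [Action.zero_hom] at h1
      have := LinearMap.congr_fun (congrArg (fun f => f.hom.hom) h1) ⟨v, hv⟩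
      simp at this
      exact this
    have hbij : Function.Bijective L :=
      ⟨LinearMap.ker_eq_bot.mp hker, LinearMap.range_eq_top.mp hrange⟩
    let e : Y.V ≃ₗ[ℂ] U.V := LinearEquiv.ofBijective L hbij
    have hesymm : ∀ (g : G) (u : CoeSort.coe U), e.symm (U.ρ g u) = Y.ρ g (e.symm u) := by
      intro g u
      apply e.injective
      rw [e.apply_symm_apply]
      show U.ρ g u = L (Y.ρ g (e.symm u))
      rw [hequiv]
      congr 1
      exact (e.apply_symm_apply u).symm
    let ginv : U ⟶ Y := ⟨FGModuleCat.ofHom e.symm.toLinearMap, fun g => by ext u; exact hesymm g u⟩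
    refine ⟨⟨ginv, ?_, ?_⟩⟩
    · apply Action.Hom.ext
      rw [Action.comp_hom, Action.id_hom]
      ext w
      exact e.symm_apply_apply w
    · apply Action.Hom.ext
      rw [Action.comp_hom, Action.id_hom]
      ext u
      exact e.apply_symm_apply u

lemma rho_sub_one_nilpotent (h : G) (hh : ∀ V : FDRep ℂ G, Simple V → V.ρ h = 1) :
    ∀ (U : FDRep ℂ G), IsNilpotent (U.ρ h - 1) := by
  intro U
  generalize hn : Module.finrank ℂ U = d
  induction d using Nat.strong_induction_on generalizing U with
  | _ d ih =>
  by_cases h0 : Module.finrank ℂ U = 0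
  · have : Subsingleton U := Module.finrank_zero_iff.mp h0
    exact ⟨1, by ext v; simp [Subsingleton.elim v 0]⟩
  · by_cases hex : ∃ p : Submodule ℂ U, (∀ g : G, ∀ v ∈ p, U.ρ g v ∈ p) ∧ p ≠ ⊥ ∧ p ≠ ⊤
    · obtain ⟨p, hp, hpbot, hptop⟩ := hex
      set f : Module.End ℂ U := U.ρ h - 1 with hf
      have hfp : ∀ v ∈ p, f v ∈ p := by
        intro v hv
        simpa [hf] using sub_mem (hp h v hv) hv
      let P : FDRep ℂ G := FDRep.of (resRep U p hp)
      have hPrank : Module.finrank ℂ P < d := by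
        rw [← hn]
        exact Submodule.finrank_lt hptop
      obtain ⟨k, hk⟩ := ih _ hPrank P rfl
      have hPρ : P.ρ h = (U.ρ h).restrict (hp h) := by
        show resRep U p hp h = _
        rw [resRep_apply]
      have hPf : P.ρ h - 1 = f.restrict hfp := by
        rw [hPρ]
        exact aux_restrict_sub_one (U.ρ h) p (hp h) hfp
      rw [hPf] at hk
      have hfk : ∀ v ∈ p, (f ^ k) v = 0 := by
        intro v hv
        have h1 := Module.End.pow_restrict k hfp
        have h2 : (f ^ k).restrict _ = 0 := h1 ▸ hk
        have := LinearMap.congr_fun h2 ⟨v, hv⟩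
        simpa [LinearMap.restrict_apply] using congrArg Subtype.val this
      let Q : FDRep ℂ G := FDRep.of (quotRep U p hp)
      have hQrank : Module.finrank ℂ Q < d := by
        rw [← hn]
        have hsum := Submodule.finrank_quotient_add_finrank p
        have hppos : 0 < Module.finrank ℂ p := by
          have : Nontrivial p := Submodule.nontrivial_iff_ne_bot.mpr hpbot
          exact Module.finrank_pos
        have hQeq : Module.finrank ℂ Q = Module.finrank ℂ (U ⧸ p) := rfl
        rw [hQeq]
        omega
      obtain ⟨l, hl⟩ := ih _ hQrank Q rfl
      set fq : Module.End ℂ Q := Q.ρ h - 1 with hfq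
      have hQρ : Q.ρ h = p.mapQ p (U.ρ h) (fun v hv => hp h v hv) := by
        show quotRep U p hp h = _
        rw [quotRep_apply]
      have hstep : ∀ w : U, fq (Submodule.Quotient.mk w) = Submodule.Quotient.mk (f w) := by
        intro w
        show (Q.ρ h - 1) (Submodule.Quotient.mk w) = _
        rw [LinearMap.sub_apply, hQρ]
        erw [Submodule.mapQ_apply]
        rw [hf, LinearMap.sub_apply, Submodule.Quotient.mk_sub]
        rfl
      have hcompat : ∀ v : U, ∀ j : ℕ, Submodule.Quotient.mk ((f ^ j) v) =
          (fq ^ j) (Submodule.Quotient.mk v : U ⧸ p) := by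
        intro v j
        induction j with
        | zero => simp
        | succ j hj =>
          rw [pow_succ', pow_succ']
          show Submodule.Quotient.mk (f ((f^j) v)) = fq ((fq ^j) (Submodule.Quotient.mk v))
          rw [← hj, hstep]
      refine ⟨k + l, ?_⟩
      ext v
      rw [pow_add]
      show (f ^ k) ((f ^ l) v) = 0
      have hmem : (f ^ l) v ∈ p := by
        rw [← Submodule.Quotient.mk_eq_zero]
        rw [hcompat v l, hl]
        rfl
      exact hfk _ hmem
    · push_neg at hex
      have hnz : Nontrivial U := by
        rw [← Module.finrank_pos_iff (R := ℂ)]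
        omega
      have : Simple U := simple_of_no_invariant U hnz (by
        intro p hp
        by_contra hcon
        push_neg at hcon
        exact hcon.2 (hex p hp hcon.1))
      rw [hh U this]
      exact ⟨1, by simp⟩

/-- An element acting trivially in every simple representation is trivial. -/
lemma eq_one_of_trivial_on_simples (h : G) (hh : ∀ V : FDRep ℂ G, Simple V → V.ρ h = 1) :
    h = 1 := by
  classical
  let W : FDRep ℂ G := FDRep.of (Representation.ofMulAction ℂ G G)
  obtain ⟨k, hk⟩ := rho_sub_one_nilpotent h hh W
  have hm : Fintype.card G ≠ 0 := Fintype.card_ne_zero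
  have hsemi : Module.End.IsSemisimple (W.ρ h : Module.End ℂ W) :=
    aux_semisimple_of_pow_eq_one hm (aux_rho_pow_card W h)
  have hsub : Module.End.IsSemisimple (W.ρ h - 1 : Module.End ℂ W) := by
    have := (Module.End.isSemisimple_sub_algebraMap_iff (f := W.ρ h) (μ := (1:ℂ))).mpr hsemi
    simpa using this
  have h0 : W.ρ h - 1 = 0 := Module.End.eq_zero_of_isNilpotent_isSemisimple ⟨k, hk⟩ hsub
  have hW : W.ρ h = 1 := by rwa [sub_eq_zero] at h0
  have happ : (Representation.ofMulAction ℂ G G h) (MonoidAlgebra.single (1:G) (1:ℂ)) =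
      MonoidAlgebra.single (1:G) (1:ℂ) := by
    have := LinearMap.congr_fun hW (MonoidAlgebra.single (1:G) (1:ℂ))
    exact this
  rw [Representation.ofMulAction_single] at happ
  have : h • (1:G) = 1 := by
    by_contra hne
    have := MonoidAlgebra.single_left_injective (one_ne_zero (α := ℂ)) happ
    exact hne this
  simpa using this

end GroupRep

/-! ### Main theorem -/

/-- if `G` is nested with chain of centers `X 0 > ⋯ > X n`, then for every
`i ≤ n` the image of `X i` in `G ⧸ ⁅X i, G⁆` is the center of that quotient; in
particular `X n = Z(G)`. -/
theorem chain_image_is_center (G : Type) [Group G] [Fintype G]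
    (n : ℕ) (X : ℕ → Subgroup G) (hX : IsChainOfCenters n X) :
    (∀ i ≤ n, ∀ (N : Subgroup G) [N.Normal], N = ⁅X i, (⊤ : Subgroup G)⁆ →
        Subgroup.map (QuotientGroup.mk' N) (X i) = Subgroup.center (G ⧸ N)) ∧
      X n = Subgroup.center G := by
  obtain ⟨htop, hnormal, hlt, hexists, hall⟩ := hX
  -- antitonicity of the chain
  have hchain : ∀ j ≤ n, X n ≤ X j := by
    have key : ∀ k, ∀ j, j + k ≤ n → X (j + k) ≤ X j := by
      intro k
      induction k with
      | zero => intro j _; simp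
      | succ k ihk =>
        intro j hjk
        have h1 : X (j + k + 1) ≤ X (j + k) := (hlt (j + k) (by omega)).le
        have h2 : X (j + k) ≤ X j := ihk j (by omega)
        calc X (j + (k + 1)) = X (j + k + 1) := by ring_nf
          _ ≤ X (j + k) := h1
          _ ≤ X j := h2
    intro j hj
    have := key (n - j) j (by omega)
    rwa [Nat.add_sub_cancel' hj] at this
  constructor
  · intro i hi N hNnorm hN
    obtain ⟨V, hVs, hVc⟩ := hexists i hi
    haveI := hVs
    haveI : Nontrivial V := nontrivial_of_simple V
    have hscal : ∀ x ∈ X i, ∃ c : ℂ, V.ρ x = c • 1 := by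
      intro x hx
      refine scalar_of_mem_charCenter V ?_
      rw [hVc]
      exact hx
    have hNker : N ≤ repKer V := by
      rw [hN]
      refine Subgroup.commutator_le.mpr fun x hx g _ => ?_
      obtain ⟨c, hc⟩ := hscal x hx
      refine commutator_mem_repKer_of_commute V ?_
      rw [hc]
      exact (Commute.one_left (V.ρ g)).smul_left c
    ext q
    simp only [Subgroup.mem_map]
    constructor
    · rintro ⟨x, hx, rfl⟩
      rw [Subgroup.mem_center_iff]
      intro q'
      induction q' using QuotientGroup.induction_on with
      | H g =>
        have hmem : ⁅x, g⁆ ∈ N := by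
          rw [hN]
          exact Subgroup.commutator_mem_commutator hx (Subgroup.mem_top g)
        have h1 : (QuotientGroup.mk' N) ⁅x, g⁆ = 1 := by
          rw [← MonoidHom.mem_ker, QuotientGroup.ker_mk']
          exact hmem
        rw [map_commutatorElement] at h1
        exact (commutatorElement_eq_one_iff_commute.mp h1).symm
    · intro hq
      obtain ⟨g, rfl⟩ := QuotientGroup.mk'_surjective N q
      have hcomm : ∀ a : G, Commute (V.ρ a) (V.ρ g) := by
        intro a
        refine commute_of_commutator_mem_repKer V (hNker ?_)
        rw [← QuotientGroup.ker_mk' N, MonoidHom.mem_ker, map_commutatorElement]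
        exact commutatorElement_eq_one_iff_commute.mpr
          (Subgroup.mem_center_iff.mp hq ((QuotientGroup.mk' N) a))
      obtain ⟨c, hc⟩ := schur_scalar V g hcomm
      refine ⟨g, ?_, rfl⟩
      have : g ∈ charCenter V := mem_charCenter_of_scalar V hc
      rwa [hVc] at this
  · ext z
    constructor
    · intro hz
      rw [Subgroup.mem_center_iff]
      intro g
      have hcomm1 : ⁅z, g⁆ = 1 := by
        refine eq_one_of_trivial_on_simples _ fun V hVs => ?_
        haveI := hVs
        obtain ⟨j, hj, hVc⟩ := hall V hVs
        have hzV : z ∈ charCenter V := by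
          rw [hVc]
          exact hchain j hj hz
        obtain ⟨c, hc⟩ := scalar_of_mem_charCenter V hzV
        have : ⁅z, g⁆ ∈ repKer V := by
          refine commutator_mem_repKer_of_commute V ?_
          rw [hc]
          exact (Commute.one_left (V.ρ g)).smul_left c
        exact (mem_repKer_iff V _).mp this
      have := commutatorElement_eq_one_iff_commute.mp hcomm1
      exact this.symm
    · intro hz
      obtain ⟨V, hVs, hVc⟩ := hexists n le_rfl
      haveI := hVs
      haveI : Nontrivial V := nontrivial_of_simple V
      have hcomm : ∀ a : G, Commute (V.ρ a) (V.ρ z) := by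
        intro a
        have : a * z = z * a := Subgroup.mem_center_iff.mp hz a
        show V.ρ a * V.ρ z = V.ρ z * V.ρ a
        rw [← map_mul, ← map_mul, this]
      obtain ⟨c, hc⟩ := schur_scalar V z hcomm
      have : z ∈ charCenter V := mem_charCenter_of_scalar V hc
      rwa [hVc] at this
end
end

section
/- Let G be a finite nested group with chain of centers G = X_0 > X_1 > ⋯ > X_n ≥ 1. Then for every i with 1 ≤ i ≤ n, one has the strict containment [X_i,G] < [X_{i-1},G]. -/
set_option linter.unusedSectionVars false
set_option maxHeartbeats 1000000


open CategoryTheory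

noncomputable section

namespace NestedAux

open Module Polynomial

variable {G : Type} [Group G] [Fintype G]

lemma rho_pow_orderOf (V : FDRep ℂ G) (g : G) : (V.ρ g) ^ (orderOf g) = 1 := by
  rw [← map_pow, pow_orderOf_eq_one, map_one]

lemma abs_eq_one_of_pow {c : ℂ} {m : ℕ} (hm : m ≠ 0) (h : c ^ m = 1) : ‖c‖ = 1 := by
  have h1 : ‖c‖ ^ m = 1 := by
    rw [← norm_pow, h, norm_one]
  rcases (pow_eq_one_iff_cases).mp h1 with h | h | h
  · omega
  · exact h
  · exfalso; have := norm_nonneg c; rw [h.1] at this; linarith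

lemma rho_isSemisimple (V : FDRep ℂ G) (g : G) : Module.End.IsSemisimple (V.ρ g) := by
  have hm : ((orderOf g : ℕ) : ℂ) ≠ 0 := Nat.cast_ne_zero.mpr (orderOf_pos g).ne'
  refine Module.End.isSemisimple_of_squarefree_aeval_eq_zero
    (p := X ^ (orderOf g) - C 1)
    ((Polynomial.separable_X_pow_sub_C 1 hm one_ne_zero).squarefree) ?_
  simp [map_sub, map_pow, aeval_X, aeval_C, rho_pow_orderOf, sub_self]

lemma abs_eq_one_of_hasEigenvalue {V : FDRep ℂ G} {g : G} {μ : ℂ}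
    (h : Module.End.HasEigenvalue (V.ρ g) μ) : ‖μ‖ = 1 := by
  obtain ⟨v, hv⟩ := h.exists_hasEigenvector
  have h0 : (1 : Module.End ℂ V) v = μ ^ orderOf g • v := by
    rw [← rho_pow_orderOf V g]; exact hv.pow_apply _
  rw [Module.End.one_apply] at h0
  have h2 : (μ ^ orderOf g - 1) • v = 0 := by
    rw [sub_smul, one_smul, ← h0, sub_self]
  rcases smul_eq_zero.mp h2 with h3 | h3
  · exact abs_eq_one_of_pow (orderOf_pos g).ne' (by linear_combination h3)
  · exact absurd h3 hv.2

lemma exists_smul_id_of_abs_char {V : FDRep ℂ G} [Nontrivial V] {g : G}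
    (hg : g ∈ charCenter V) : ∃ c : ℂ, V.ρ g = c • 1 := by
  classical
  set A : Module.End ℂ V := V.ρ g with hA
  -- eigenspace decomposition
  have hss : A.IsFinitelySemisimple := (rho_isSemisimple V g).isFinitelySemisimple
  have heqs : ∀ μ : ℂ, A.maxGenEigenspace μ = A.eigenspace μ :=
    fun μ => hss.maxGenEigenspace_eq_eigenspace μ
  have hsup : ⨆ μ : ℂ, A.eigenspace μ = ⊤ := by
    rw [← Module.End.iSup_maxGenEigenspace_eq_top A]; simp_rw [heqs]
  have hindep := A.eigenspaces_iSupIndep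
  have hint : DirectSum.IsInternal A.eigenspace :=
    DirectSum.isInternal_submodule_of_iSupIndep_of_iSup_eq_top hindep hsup
  have hfin : {μ : ℂ | A.eigenspace μ ≠ ⊥}.Finite :=
    WellFoundedGT.finite_ne_bot_of_iSupIndep hindep
  have hmapsTo : ∀ μ : ℂ, Set.MapsTo A (A.eigenspace μ) (A.eigenspace μ) := by
    intro μ x hx
    rw [SetLike.mem_coe, Module.End.mem_eigenspace_iff] at hx ⊢
    rw [hx, map_smul, hx]
  -- trace formulas
  have hAtr := LinearMap.trace_eq_sum_trace_restrict' hint hfin hmapsTo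
  have hres : ∀ μ : ℂ, LinearMap.trace ℂ (A.eigenspace μ) (A.restrict (hmapsTo μ)) =
      μ * (finrank ℂ (A.eigenspace μ) : ℂ) := by
    intro μ
    have : A.restrict (hmapsTo μ) =
        (μ • LinearMap.id : A.eigenspace μ →ₗ[ℂ] A.eigenspace μ) := by
      ext x
      have hx := Module.End.mem_eigenspace_iff.mp x.2
      exact hx
    rw [this, map_smul, LinearMap.trace_id, smul_eq_mul]
  have hchar : V.character g = ∑ μ ∈ hfin.toFinset, μ * (finrank ℂ (A.eigenspace μ) : ℂ) := by
    rw [show V.character g = LinearMap.trace ℂ V A from rfl, hAtr]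
    exact Finset.sum_congr rfl fun μ _ => hres μ
  -- sum of dimensions
  have hIdMapsTo : ∀ μ : ℂ, Set.MapsTo (LinearMap.id : V →ₗ[ℂ] V)
      (A.eigenspace μ) (A.eigenspace μ) := fun μ x hx => hx
  have hdsum : (finrank ℂ V : ℝ) = ∑ μ ∈ hfin.toFinset, (finrank ℂ (A.eigenspace μ) : ℝ) := by
    have h1 := LinearMap.trace_eq_sum_trace_restrict' hint hfin hIdMapsTo
    have h2 : ∀ μ : ℂ, LinearMap.trace ℂ (A.eigenspace μ)
        ((LinearMap.id : V →ₗ[ℂ] V).restrict (hIdMapsTo μ)) =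
        (finrank ℂ (A.eigenspace μ) : ℂ) := by
      intro μ
      have : (LinearMap.id : V →ₗ[ℂ] V).restrict (hIdMapsTo μ) = LinearMap.id := by
        ext x; rfl
      rw [this, LinearMap.trace_id]
    rw [LinearMap.trace_id] at h1
    simp_rw [h2] at h1
    exact_mod_cast h1
  -- numerics
  have hd0 : 0 < finrank ℂ V := finrank_pos
  have hgabs : ‖V.character g‖ = (finrank ℂ V : ℝ) := by
    have hg' : ((‖V.character g‖ : ℝ) : ℂ) = V.character 1 := hg
    rw [FDRep.char_one] at hg'
    exact_mod_cast hg'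
  have ht0 : V.character g ≠ 0 := by
    intro h
    rw [h, norm_zero] at hgabs
    have : (0:ℝ) < (finrank ℂ V : ℝ) := by exact_mod_cast hd0
    linarith [hgabs]
  set t := V.character g with ht
  have habsne : ((‖t‖ : ℝ) : ℂ) ≠ 0 := by
    simpa using norm_ne_zero_iff.mpr ht0
  set u : ℂ := t / ((‖t‖ : ℝ) : ℂ) with hu
  have huabs : ‖u‖ = 1 := by
    rw [hu, norm_div, Complex.norm_real, Real.norm_eq_abs, abs_of_nonneg (norm_nonneg t),
      div_self (norm_ne_zero_iff.mpr ht0)]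
  have hconj : (starRingEnd ℂ) u * t = ((‖t‖ : ℝ) : ℂ) := by
    have habs2 : (starRingEnd ℂ) t * t = ((‖t‖ : ℝ) : ℂ) ^ 2 := by
      rw [← Complex.normSq_eq_conj_mul_self]
      rw [← Complex.sq_norm]
      push_cast
      ring
    rw [hu, map_div₀, Complex.conj_ofReal, div_mul_eq_mul_div, habs2, sq, mul_div_assoc,
      div_self habsne, mul_one]
  -- the real sum identity
  have hre : ∑ μ ∈ hfin.toFinset, ((starRingEnd ℂ) u * μ).re * (finrank ℂ (A.eigenspace μ) : ℝ)
      = ∑ μ ∈ hfin.toFinset, (finrank ℂ (A.eigenspace μ) : ℝ) := by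
    have h1 : (starRingEnd ℂ) u * t = ∑ μ ∈ hfin.toFinset,
        ((starRingEnd ℂ) u * μ) * (finrank ℂ (A.eigenspace μ) : ℂ) := by
      rw [hchar, Finset.mul_sum]
      exact Finset.sum_congr rfl fun μ _ => by ring
    have h2 := congrArg Complex.re h1
    rw [hconj, Complex.ofReal_re, Complex.re_sum] at h2
    have h3 : ∀ μ ∈ hfin.toFinset, (((starRingEnd ℂ) u * μ) * (finrank ℂ (A.eigenspace μ) : ℂ)).re
        = ((starRingEnd ℂ) u * μ).re * (finrank ℂ (A.eigenspace μ) : ℝ) := by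
      intro μ _
      simp [Complex.mul_re]
    rw [Finset.sum_congr rfl h3] at h2
    rw [← h2, hgabs, hdsum]
  have habsμ : ∀ μ ∈ hfin.toFinset, ‖μ‖ = 1 := by
    intro μ hμ
    exact abs_eq_one_of_hasEigenvalue (μ := μ) (g := g) (V := V) (hfin.mem_toFinset.mp hμ)
  have hle : ∀ μ ∈ hfin.toFinset, ((starRingEnd ℂ) u * μ).re * (finrank ℂ (A.eigenspace μ) : ℝ)
      ≤ (finrank ℂ (A.eigenspace μ) : ℝ) := by
    intro μ hμ
    have h1 : ((starRingEnd ℂ) u * μ).re ≤ 1 := by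
      calc ((starRingEnd ℂ) u * μ).re ≤ ‖(starRingEnd ℂ) u * μ‖ :=
            Complex.re_le_norm _
        _ = 1 := by rw [norm_mul, Complex.norm_conj, huabs, habsμ μ hμ, mul_one]
    have h2 : (0:ℝ) ≤ (finrank ℂ (A.eigenspace μ) : ℝ) := Nat.cast_nonneg _
    nlinarith
  have heach := (Finset.sum_eq_sum_iff_of_le hle).mp hre
  -- each eigenvalue equals u
  have hμu : ∀ μ ∈ hfin.toFinset, μ = u := by
    intro μ hμ
    have hdμ : (0:ℝ) < (finrank ℂ (A.eigenspace μ) : ℝ) := by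
      have : Nontrivial (A.eigenspace μ) :=
        Submodule.nontrivial_iff_ne_bot.mpr (hfin.mem_toFinset.mp hμ)
      exact_mod_cast finrank_pos
    have hr1 : ((starRingEnd ℂ) u * μ).re = 1 := by
      refine mul_right_cancel₀ hdμ.ne' ?_
      rw [one_mul]
      exact heach μ hμ
    set z := (starRingEnd ℂ) u * μ with hz
    have hzabs : ‖z‖ = 1 := by
      rw [hz, norm_mul, Complex.norm_conj, huabs, habsμ μ hμ, mul_one]
    have him : z.im = 0 := by
      have h4 : z.re ^ 2 + z.im ^ 2 = 1 := by
        have := Complex.sq_norm z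
        rw [hzabs, Complex.normSq_apply] at this
        nlinarith [this]
      nlinarith [hr1, h4]
    have hz1 : z = 1 := Complex.ext (by simp [hr1]) (by simp [him])
    have huu : u * (starRingEnd ℂ) u = 1 := by
      rw [Complex.mul_conj]
      rw [Complex.normSq_eq_norm_sq, huabs]
      norm_num
    calc μ = (u * (starRingEnd ℂ) u) * μ := by rw [huu, one_mul]
      _ = u * z := by rw [hz]; ring
      _ = u := by rw [hz1, mul_one]
  -- conclude A = u • 1
  refine ⟨u, ?_⟩
  have hker : ⊤ ≤ LinearMap.ker (A - u • 1) := by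
    rw [← hsup]
    refine iSup_le fun μ => ?_
    by_cases hμ : A.eigenspace μ = ⊥
    · rw [hμ]; exact bot_le
    · have hμ' : μ = u := hμu μ (hfin.mem_toFinset.mpr hμ)
      subst hμ'
      intro x hx
      have hx' := Module.End.mem_eigenspace_iff.mp hx
      rw [LinearMap.mem_ker, LinearMap.sub_apply, LinearMap.smul_apply, Module.End.one_apply,
        hx', sub_self]
  have hzero : A - u • 1 = 0 := LinearMap.ker_eq_top.mp (top_le_iff.mp hker)
  exact sub_eq_zero.mp hzero

end NestedAux

namespace NestedAux

open Module

variable {G : Type} [Group G] [Fintype G]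

lemma nontrivial_of_simple (V : FDRep ℂ G) [Simple V] : Nontrivial V := by
  by_contra h
  haveI : Subsingleton V := not_nontrivial_iff_subsingleton.mp h
  apply CategoryTheory.id_nonzero V
  apply Action.Hom.ext
  ext v
  exact Subsingleton.elim (α := V) _ _

lemma mem_charCenter_of_smul_id {V : FDRep ℂ G} [Nontrivial V] {g : G} {c : ℂ}
    (h : V.ρ g = c • 1) : g ∈ charCenter V := by
  have habs : ‖c‖ = 1 := by
    obtain ⟨v, hv⟩ := exists_ne (0 : V)
    have h1 : (V.ρ g) ^ orderOf g = 1 := rho_pow_orderOf V g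
    rw [h, smul_pow, one_pow] at h1
    have h2 := congrArg (fun f : Module.End ℂ V => f v) h1
    simp only [LinearMap.smul_apply, Module.End.one_apply] at h2
    have h3 : (c ^ orderOf g - 1) • v = 0 := by
      rw [sub_smul, one_smul, h2, sub_self]
    rcases smul_eq_zero.mp h3 with h4 | h4
    · exact abs_eq_one_of_pow (orderOf_pos g).ne' (by linear_combination h4)
    · exact absurd h4 hv
  show ((‖V.character g‖ : ℝ) : ℂ) = V.character 1
  have hch : V.character g = c * (finrank ℂ V : ℂ) := by
    show LinearMap.trace ℂ V (V.ρ g) = _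
    rw [h, map_smul, LinearMap.trace_one, smul_eq_mul]
  rw [hch, FDRep.char_one, norm_mul, habs, one_mul]
  simp

lemma exists_smul_id_of_commutes {V : FDRep ℂ G} [Simple V] {g : G}
    (hc : ∀ h : G, V.ρ h * V.ρ g = V.ρ g * V.ρ h) : ∃ c : ℂ, V.ρ g = c • 1 := by
  let f : V ⟶ V := ⟨InducedCategory.homMk (ModuleCat.ofHom (V.ρ g)), fun h => by
    ext1
    exact (hc h).symm⟩
  obtain ⟨c, hcf⟩ := CategoryTheory.endomorphism_simple_eq_smul_id ℂ f
  refine ⟨c, ?_⟩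
  have := congrArg (fun φ : V ⟶ V => φ.hom.hom.hom) hcf
  exact this.symm

/-- The subgroup of `g` acting trivially. -/
def rhoKer (V : FDRep ℂ G) : Subgroup G where
  carrier := {g | V.ρ g = 1}
  one_mem' := map_one V.ρ
  mul_mem' := by
    intro a b ha hb
    show V.ρ (a * b) = 1
    rw [map_mul, ha, hb, one_mul]
  inv_mem' := by
    intro a ha
    show V.ρ a⁻¹ = 1
    have : V.ρ a⁻¹ * V.ρ a = 1 := by rw [← map_mul, inv_mul_cancel, map_one]
    rwa [ha, mul_one] at this

lemma mem_rhoKer {V : FDRep ℂ G} {g : G} : g ∈ rhoKer V ↔ V.ρ g = 1 := Iff.rfl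

end NestedAux

/-- if `G` is nested with chain of centers `X 0 > ⋯ > X n`, then for every
`1 ≤ i ≤ n` one has the strict containment `⁅X i, G⁆ < ⁅X (i-1), G⁆`. -/
theorem commutators_strictly_decrease (G : Type) [Group G] [Fintype G]
    (n : ℕ) (X : ℕ → Subgroup G) (hX : IsChainOfCenters n X) :
    ∀ i < n, ⁅X (i + 1), (⊤ : Subgroup G)⁆ < ⁅X i, (⊤ : Subgroup G)⁆ := by
  obtain ⟨hX0, hnorm, hlt, hexists, hall⟩ := hX
  intro i hi
  obtain ⟨V, hV, hVc⟩ := hexists (i + 1) (by omega)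
  haveI := hV
  haveI : Nontrivial V := NestedAux.nontrivial_of_simple V
  have hK1 : ⁅X (i + 1), (⊤ : Subgroup G)⁆ ≤ NestedAux.rhoKer V := by
    rw [Subgroup.commutator_le]
    intro g hg h _
    have hgc : g ∈ charCenter V := by rw [hVc]; exact hg
    obtain ⟨c, hc⟩ := NestedAux.exists_smul_id_of_abs_char hgc
    have hcomm : ∀ B : Module.End ℂ V, V.ρ g * B = B * V.ρ g := by
      intro B
      rw [hc, smul_mul_assoc, one_mul, mul_smul_comm, mul_one]
    open commutatorElement in show V.ρ ⁅g, h⁆ = 1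
    rw [commutatorElement_def]
    calc V.ρ (g * h * g⁻¹ * h⁻¹)
        = V.ρ g * V.ρ h * V.ρ g⁻¹ * V.ρ h⁻¹ := by
          rw [map_mul, map_mul, map_mul]
      _ = V.ρ h * V.ρ g * V.ρ g⁻¹ * V.ρ h⁻¹ := by rw [hcomm (V.ρ h)]
      _ = 1 := by
          rw [mul_assoc (V.ρ h), ← map_mul, mul_inv_cancel, map_one, mul_one, ← map_mul,
            mul_inv_cancel, map_one]
  have hK2 : ¬ ⁅X i, (⊤ : Subgroup G)⁆ ≤ NestedAux.rhoKer V := by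
    intro hle
    refine (hlt i hi).not_ge ?_
    intro g hg
    have hcomm : ∀ h : G, V.ρ h * V.ρ g = V.ρ g * V.ρ h := by
      intro h
      have hmem : V.ρ (g * h * g⁻¹ * h⁻¹) = 1 :=
        hle (Subgroup.commutator_mem_commutator hg (Subgroup.mem_top h))
      have e1 : g * h = (g * h * g⁻¹ * h⁻¹) * (h * g) := by group
      have e2 : V.ρ (g * h) = V.ρ (h * g) := by
        rw [e1, map_mul, hmem, one_mul]
      rw [map_mul, map_mul] at e2
      exact e2.symm
    obtain ⟨c, hc⟩ := NestedAux.exists_smul_id_of_commutes hcomm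
    have hmem : g ∈ charCenter V := NestedAux.mem_charCenter_of_smul_id hc
    rw [hVc] at hmem
    exact hmem
  refine lt_of_le_of_ne (Subgroup.commutator_mono (le_of_lt (hlt i hi)) le_rfl) ?_
  intro heq
  exact hK2 (heq ▸ hK1)
end
end

section
/- Let G be a finite group with a chain of normal subgroups G = X_0 > X_1 > ⋯ > X_n ≥ 1 such that every normal subgroup N of G satisfies, for all i with 1 ≤ i ≤ n, either [X_{i-1},G] ≤ N or N ≤ X_i. Then for each i with 1 ≤ i ≤ n, one of the following holds: (1) [X_{i-1},G] ≤ X_i, or (2) the image of [X_{i-1},G]X_i in G/X_i is the unique minimal normal subgroup of G/X_i. -/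
open CategoryTheory

noncomputable section

/-- if `G` has a chain of normal subgroups `G = X 0 > ⋯ > X n ≥ 1` such that
every normal subgroup `N` satisfies `⁅X (i-1), G⁆ ≤ N` or `N ≤ X i` for all `1 ≤ i ≤ n`,
then for each such `i` either `⁅X (i-1), G⁆ ≤ X i`, or the image of `⁅X (i-1), G⁆ • X i`
in `G ⧸ X i` is the unique minimal normal subgroup of `G ⧸ X i`. -/
theorem unique_minimal_normal_of_chain (G : Type) [Group G] [Fintype G]
    (n : ℕ) (X : ℕ → Subgroup G) (htop : X 0 = ⊤) (hnorm : ∀ i ≤ n, (X i).Normal)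
    (hstrict : ∀ i < n, X (i + 1) < X i)
    (hcond : ∀ N : Subgroup G, N.Normal →
      ∀ i < n, ⁅X i, (⊤ : Subgroup G)⁆ ≤ N ∨ N ≤ X (i + 1)) :
    ∀ i < n, ⁅X i, (⊤ : Subgroup G)⁆ ≤ X (i + 1) ∨
      ∀ (M : Subgroup G) [M.Normal], M = X (i + 1) →
        IsMinimalNormal
            (Subgroup.map (QuotientGroup.mk' M) (⁅X i, (⊤ : Subgroup G)⁆ ⊔ X (i + 1))) ∧
          ∀ K : Subgroup (G ⧸ M), IsMinimalNormal K →
            K = Subgroup.map (QuotientGroup.mk' M) (⁅X i, (⊤ : Subgroup G)⁆ ⊔ X (i + 1)) := by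
  intro i hi
  by_cases hC : ⁅X i, (⊤ : Subgroup G)⁆ ≤ X (i + 1)
  · exact Or.inl hC
  · right
    intro M _ hM
    subst hM
    haveI hXi : (X i).Normal := hnorm i hi.le
    haveI hMn : (X (i + 1)).Normal := hnorm (i + 1) hi
    set C := ⁅X i, (⊤ : Subgroup G)⁆ with hCdef
    haveI hCn : C.Normal := Subgroup.commutator_normal _ _
    set f := QuotientGroup.mk' (X (i + 1)) with hf
    have hker : f.ker = X (i + 1) := QuotientGroup.ker_mk' _
    have hsurj : Function.Surjective f := QuotientGroup.mk'_surjective _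
    set J := Subgroup.map f (C ⊔ X (i + 1)) with hJ
    have hJnorm : J.Normal := Subgroup.Normal.map inferInstance f hsurj
    have hJbot : J ≠ ⊥ := by
      intro h
      exact hC (le_sup_left.trans (((Subgroup.map_eq_bot_iff _).1 h).trans hker.le))
    have key : ∀ K : Subgroup (G ⧸ X (i + 1)), K.Normal → K ≠ ⊥ → J ≤ K := by
      intro K hKn hKbot
      have hMle : X (i + 1) ≤ K.comap f := by
        refine hker.ge.trans ?_
        rw [← f.comap_bot]
        exact Subgroup.comap_mono bot_le
      rcases hcond (K.comap f) (hKn.comap f) i hi with h | h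
      · calc J ≤ Subgroup.map f (K.comap f) := Subgroup.map_mono (sup_le h hMle)
          _ = K := Subgroup.map_comap_eq_self_of_surjective hsurj K
      · exfalso
        apply hKbot
        rw [← Subgroup.map_comap_eq_self_of_surjective hsurj K]
        exact (Subgroup.map_eq_bot_iff _).2 (h.trans hker.ge)
    constructor
    · exact ⟨hJnorm, hJbot, fun K hKn hKbot hKle => le_antisymm hKle (key K hKn hKbot)⟩
    · intro K hK
      exact (hK.2.2 J hJnorm hJbot (key K hK.1 hK.2.1)).symm
end
end
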